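/- Let c ∈ ℝ, and let real numbers α₁ = -(1+c⁴)/(1+c²), β₂ = c² - 1, and α₃, α₄, β₃, β₄ satisfy α₃² - α₄² = (1+c²)² - α₁², β₃² - β₄² = (1+c²)² - β₂², and α₃β₃ = α₄β₄. Then no solution exists; i.e., the three equations are inconsistent. -/

import Mathlib

/-- Inconsistency of the system in the two-regular-ends case: for real `c ≠ 0`, there are no
real numbers `α₃, α₄, β₃, β₄` with `α₃² - α₄² = (1+c²)² - α₁²`, `β₃² - β₄² = (1+c²)² - β₂²`
and `α₃β₃ = α₄β₄`, where `α₁ = -(1+c⁴)/(1+c²)` and `β₂ = c² - 1`. -/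
theorem stmt13 (c : ℝ) (hc : c ≠ 0) (α₁ β₂ α₃ α₄ β₃ β₄ : ℝ)
    (hα₁ : α₁ = -(1 + c ^ 4) / (1 + c ^ 2)) (hβ₂ : β₂ = c ^ 2 - 1)
    (e1 : α₃ ^ 2 - α₄ ^ 2 = (1 + c ^ 2) ^ 2 - α₁ ^ 2)
    (e2 : β₃ ^ 2 - β₄ ^ 2 = (1 + c ^ 2) ^ 2 - β₂ ^ 2)
    (e3 : α₃ * β₃ = α₄ * β₄) : False := by
  have hd : (0:ℝ) < 1 + c ^ 2 := by positivity
  have hc2 : (0:ℝ) < c ^ 2 := by positivity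
  have hα₁2 : α₁ ^ 2 = (1 + c ^ 4) ^ 2 / (1 + c ^ 2) ^ 2 := by
    rw [hα₁]; field_simp
  have h1 : α₃ ^ 2 - α₄ ^ 2 > 0 := by
    rw [e1, hα₁2]
    rw [gt_iff_lt, sub_pos, div_lt_iff₀ (by positivity)]
    nlinarith [sq_nonneg c, sq_nonneg (c^2), pow_pos hc2 2, pow_pos hc2 3]
  have h2 : β₃ ^ 2 - β₄ ^ 2 > 0 := by
    rw [e2, hβ₂]; nlinarith
  have key : (α₃ * β₃) ^ 2 = (α₄ * β₄) ^ 2 := by rw [e3]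
  nlinarith [sq_nonneg α₄, sq_nonneg β₄, mul_pos h1 h2, key]
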